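/- Let n ≥ 3. Every order-n Latin square has inner distance at most ⌊(n−1)/2⌋, and there exists an order-n Latin square whose inner distance equals ⌊(n−1)/2⌋. -/
import Mathlib


/-- Distance between two symbols of `ZMod n`: the minimum of the two cyclic differences. -/
def zdist {n : ℕ} (a b : ZMod n) : ℕ := min (a - b).val (b - a).val

/-- An order-`n` Latin square: every row and every column is injective. -/
def IsLatin (n : ℕ) (L : Fin n → Fin n → ZMod n) : Prop :=
  (∀ i, Function.Injective (L i)) ∧ ∀ j, Function.Injective fun i => L i j

/-- The inner distance of a square: the minimum of `zdist` over all pairs of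
horizontally or vertically adjacent cells. -/
noncomputable def innerDist (n : ℕ) (L : Fin n → Fin n → ZMod n) : ℕ :=
  sInf { d : ℕ |
    (∃ i : Fin n, ∃ j : ℕ, ∃ hj : j + 1 < n,
      d = zdist (L i ⟨j, Nat.lt_of_succ_lt hj⟩) (L i ⟨j + 1, hj⟩)) ∨
    (∃ j : Fin n, ∃ i : ℕ, ∃ hi : i + 1 < n,
      d = zdist (L ⟨i, Nat.lt_of_succ_lt hi⟩ j) (L ⟨i + 1, hi⟩ j)) }

lemma zdist_add_left {n : ℕ} (c a b : ZMod n) : zdist (c + a) (c + b) = zdist a b := by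
  simp [zdist, add_sub_add_left_eq_sub]

lemma natCast_val_self {n : ℕ} [NeZero n] (x : ZMod n) : ((x.val : ℕ) : ZMod n) = x := by
  rw [ZMod.natCast_val, ZMod.cast_id]

/-- Key arithmetic lemma for the upper bound. -/
lemma zdist_key {n : ℕ} (hn : 3 ≤ n) (a b c : ZMod n) (hab : a ≠ b) (hbc : b ≠ c)
    (hac : a ≠ c) : zdist a b ≤ (n - 1) / 2 ∨ zdist b c ≤ (n - 1) / 2 := by
  by_contra h
  push_neg at h
  obtain ⟨h1, h2⟩ := h
  haveI : NeZero n := ⟨by omega⟩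
  have hu : (b - a) ≠ 0 := sub_ne_zero.mpr (Ne.symm hab)
  have hv : (c - b) ≠ 0 := sub_ne_zero.mpr (Ne.symm hbc)
  haveI : NeZero (b - a) := ⟨hu⟩
  haveI : NeZero (c - b) := ⟨hv⟩
  have e1 : (a - b).val = n - (b - a).val := by
    rw [← ZMod.val_neg_of_ne_zero (b - a), neg_sub]
  have e2 : (b - c).val = n - (c - b).val := by
    rw [← ZMod.val_neg_of_ne_zero (c - b), neg_sub]
  have hun : (b - a).val < n := ZMod.val_lt _
  have hvn : (c - b).val < n := ZMod.val_lt _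
  have hu0 : (b - a).val ≠ 0 := by simpa [ZMod.val_eq_zero] using hu
  have hv0 : (c - b).val ≠ 0 := by simpa [ZMod.val_eq_zero] using hv
  unfold zdist at h1 h2
  rw [lt_min_iff] at h1 h2
  have hsum : (c - b).val + (b - a).val = n := by omega
  have hca : c - a = 0 := by
    have h3 : c - a = (c - b) + (b - a) := by ring
    rw [h3, ← natCast_val_self (c - b), ← natCast_val_self (b - a), ← Nat.cast_add,
      hsum, ZMod.natCast_self]
  exact hac (sub_eq_zero.mp hca).symm

/-- The extremal square's row/column permutation. -/
def sig (n j : ℕ) : ZMod n := ((j / 2 + (j % 2) * ((n + 1) / 2) : ℕ) : ZMod n)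

/-- The extremal Latin square. -/
def Lsq (n : ℕ) (i j : Fin n) : ZMod n := sig n i.val + sig n j.val

lemma sig_inj {n : ℕ} (_hn : 3 ≤ n) {j1 j2 : ℕ} (h1 : j1 < n) (h2 : j2 < n)
    (h : sig n j1 = sig n j2) : j1 = j2 := by
  unfold sig at h
  have f1 : j1 / 2 + (j1 % 2) * ((n + 1) / 2) < n := by
    rcases Nat.mod_two_eq_zero_or_one j1 with e | e <;> rw [e] <;> omega
  have f2 : j2 / 2 + (j2 % 2) * ((n + 1) / 2) < n := by
    rcases Nat.mod_two_eq_zero_or_one j2 with e | e <;> rw [e] <;> omega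
  have hv := congrArg ZMod.val h
  rw [ZMod.val_cast_of_lt f1, ZMod.val_cast_of_lt f2] at hv
  rcases Nat.mod_two_eq_zero_or_one j1 with e1 | e1 <;>
    rcases Nat.mod_two_eq_zero_or_one j2 with e2 | e2 <;>
    rw [e1, e2] at hv <;> omega

lemma sig_diff {n : ℕ} (hn : 3 ≤ n) (j : ℕ) :
    (n - 1) / 2 ≤ zdist (sig n j) (sig n (j + 1)) := by
  haveI : NeZero n := ⟨by omega⟩
  obtain ⟨d, hd1, hd2⟩ : ∃ d : ℕ, ((n - 1) / 2 ≤ d ∧ (n - 1) / 2 ≤ n - d ∧ 0 < d ∧ d < n) ∧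
      sig n (j + 1) - sig n j = (d : ZMod n) := by
    rcases Nat.mod_two_eq_zero_or_one j with hj | hj
    · have hj1 : (j + 1) % 2 = 1 := by omega
      refine ⟨(n + 1) / 2, by omega, ?_⟩
      have key : (j + 1) / 2 + ((j + 1) % 2) * ((n + 1) / 2)
          = (j / 2 + (j % 2) * ((n + 1) / 2)) + (n + 1) / 2 := by
        rw [hj, hj1]; omega
      unfold sig
      rw [key]
      push_cast
      ring
    · have hj1 : (j + 1) % 2 = 0 := by omega
      refine ⟨n / 2 + 1, by omega, ?_⟩
      have key : j / 2 + (j % 2) * ((n + 1) / 2)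
          = ((j + 1) / 2 + ((j + 1) % 2) * ((n + 1) / 2)) + ((n + 1) / 2 - 1) := by
        rw [hj, hj1]; omega
      have h4 : ((n + 1) / 2 - 1 : ℕ) + (n / 2 + 1) = n := by omega
      have hneg : (((n + 1) / 2 - 1 : ℕ) : ZMod n) = -((n / 2 + 1 : ℕ) : ZMod n) := by
        rw [eq_neg_iff_add_eq_zero, ← Nat.cast_add, h4, ZMod.natCast_self]
      unfold sig
      rw [key, Nat.cast_add, Nat.cast_add ((j + 1) / 2 + ((j + 1) % 2) * ((n + 1) / 2)), hneg]
      push_cast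
      ring
  obtain ⟨hdl, hdl2, hd0, hdn⟩ := hd1
  have hne : sig n (j + 1) - sig n j ≠ 0 := by
    rw [hd2, Ne, ZMod.natCast_eq_zero_iff]
    intro hdvd
    exact absurd (Nat.le_of_dvd hd0 hdvd) (by omega)
  haveI : NeZero (sig n (j + 1) - sig n j) := ⟨hne⟩
  have hv : (sig n (j + 1) - sig n j).val = d := by rw [hd2, ZMod.val_cast_of_lt hdn]
  have hv2 : (sig n j - sig n (j + 1)).val = n - d := by
    rw [← neg_sub, ZMod.val_neg_of_ne_zero, hv]
  unfold zdist
  omega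

lemma Lsq_latin {n : ℕ} (hn : 3 ≤ n) : IsLatin n (Lsq n) := by
  constructor
  · intro i j1 j2 h
    unfold Lsq at h
    have := add_left_cancel h
    exact Fin.ext (sig_inj hn j1.isLt j2.isLt this)
  · intro j i1 i2 h
    simp only [Lsq] at h
    have := add_right_cancel h
    exact Fin.ext (sig_inj hn i1.isLt i2.isLt this)

theorem stmt3 (n : ℕ) (hn : 3 ≤ n) :
    (∀ L : Fin n → Fin n → ZMod n, IsLatin n L → innerDist n L ≤ (n - 1) / 2) ∧
    ∃ L : Fin n → Fin n → ZMod n, IsLatin n L ∧ innerDist n L = (n - 1) / 2 := by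
  have hub : ∀ L : Fin n → Fin n → ZMod n, IsLatin n L → innerDist n L ≤ (n - 1) / 2 := by
    intro L hL
    have h01 : (0 : ℕ) + 1 < n := by omega
    have h12 : (1 : ℕ) + 1 < n := by omega
    set a := L ⟨0, by omega⟩ ⟨0, by omega⟩ with ha
    set b := L ⟨0, by omega⟩ ⟨1, by omega⟩ with hb
    set c := L ⟨0, by omega⟩ ⟨2, by omega⟩ with hc
    have hab : a ≠ b := by
      intro h
      have := hL.1 ⟨0, by omega⟩ h
      simp [Fin.ext_iff] at this
    have hbc : b ≠ c := by
      intro h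
      have := hL.1 ⟨0, by omega⟩ h
      simp [Fin.ext_iff] at this
    have hac : a ≠ c := by
      intro h
      have := hL.1 ⟨0, by omega⟩ h
      simp [Fin.ext_iff] at this
    have m1 : zdist a b ∈ { d : ℕ |
        (∃ i : Fin n, ∃ j : ℕ, ∃ hj : j + 1 < n,
          d = zdist (L i ⟨j, Nat.lt_of_succ_lt hj⟩) (L i ⟨j + 1, hj⟩)) ∨
        (∃ j : Fin n, ∃ i : ℕ, ∃ hi : i + 1 < n,
          d = zdist (L ⟨i, Nat.lt_of_succ_lt hi⟩ j) (L ⟨i + 1, hi⟩ j)) } :=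
      Or.inl ⟨⟨0, by omega⟩, 0, h01, rfl⟩
    have m2 : zdist b c ∈ { d : ℕ |
        (∃ i : Fin n, ∃ j : ℕ, ∃ hj : j + 1 < n,
          d = zdist (L i ⟨j, Nat.lt_of_succ_lt hj⟩) (L i ⟨j + 1, hj⟩)) ∨
        (∃ j : Fin n, ∃ i : ℕ, ∃ hi : i + 1 < n,
          d = zdist (L ⟨i, Nat.lt_of_succ_lt hi⟩ j) (L ⟨i + 1, hi⟩ j)) } :=
      Or.inl ⟨⟨0, by omega⟩, 1, h12, rfl⟩
    rcases zdist_key hn a b c hab hbc hac with h | h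
    · exact le_trans (Nat.sInf_le m1) h
    · exact le_trans (Nat.sInf_le m2) h
  refine ⟨hub, Lsq n, Lsq_latin hn, le_antisymm (hub _ (Lsq_latin hn)) ?_⟩
  unfold innerDist
  apply le_csInf
  · exact ⟨_, Or.inl ⟨⟨0, by omega⟩, 0, by omega, rfl⟩⟩
  · rintro d (⟨i, j, hj, rfl⟩ | ⟨j, i, hi, rfl⟩)
    · show (n - 1) / 2 ≤ zdist (Lsq n i ⟨j, _⟩) (Lsq n i ⟨j + 1, hj⟩)
      unfold Lsq
      rw [zdist_add_left]
      exact sig_diff hn j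
    · show (n - 1) / 2 ≤ zdist (Lsq n ⟨i, _⟩ j) (Lsq n ⟨i + 1, hi⟩ j)
      unfold Lsq
      rw [add_comm (sig n _) (sig n j.val), add_comm (sig n _) (sig n j.val), zdist_add_left]
      exact sig_diff hn i
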